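/- Let m, n be positive integers with 1 ≤ m ≤ n. Then L(m,n) = n; that is, every A ∈ D(m,n) satisfies tdet A ≥ n, and there exists A ∈ D(m,n) with tdet A = n. -/

import Mathlib

/-- D(m,n): n×n matrices with nonnegative integer entries, all row and column sums equal m. -/
def IsDSM (m n : ℕ) (A : Fin n → Fin n → ℕ) : Prop :=
  (∀ i, ∑ j, A i j = m) ∧ (∀ j, ∑ i, A i j = m)

/-- tdet A: maximum of a transversal sum over all permutations. -/
def tdet {n : ℕ} (A : Fin n → Fin n → ℕ) : ℕ :=
  Finset.univ.sup fun σ : Equiv.Perm (Fin n) => ∑ i, A i (σ i)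

/-- Lower bound: every matrix in D(m,n) with m ≥ 1 has a positive transversal. -/
lemma lower_bound (m n : ℕ) (hm : 1 ≤ m) (A : Fin n → Fin n → ℕ) (hA : IsDSM m n A) :
    n ≤ tdet A := by
  obtain ⟨hrow, hcol⟩ := hA
  set t : Fin n → Finset (Fin n) := fun i => Finset.univ.filter (fun j => A i j ≠ 0) with ht
  have hall : ∀ s : Finset (Fin n), s.card ≤ (s.biUnion t).card := by
    intro s
    have key : m * s.card ≤ m * (s.biUnion t).card := by
      calc m * s.card = ∑ i ∈ s, m := by simp [Finset.sum_const, mul_comm]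
        _ = ∑ i ∈ s, ∑ j ∈ s.biUnion t, A i j := by
            apply Finset.sum_congr rfl
            intro i hi
            rw [← hrow i]
            exact (Finset.sum_subset (Finset.subset_univ _) (fun j _ hj => by
              by_contra h
              exact hj (Finset.mem_biUnion.mpr ⟨i, hi, Finset.mem_filter.mpr ⟨Finset.mem_univ _, h⟩⟩))).symm
        _ = ∑ j ∈ s.biUnion t, ∑ i ∈ s, A i j := Finset.sum_comm
        _ ≤ ∑ j ∈ s.biUnion t, m := by
            apply Finset.sum_le_sum
            intro j _
            rw [← hcol j]
            exact Finset.sum_le_sum_of_subset (Finset.subset_univ s)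
        _ = m * (s.biUnion t).card := by simp [Finset.sum_const, mul_comm]
    exact Nat.le_of_mul_le_mul_left key hm
  obtain ⟨f, hfinj, hf⟩ := (Finset.all_card_le_biUnion_card_iff_exists_injective t).mp hall
  have hbij : Function.Bijective f := (Finite.injective_iff_bijective).mp hfinj
  let σ := Equiv.ofBijective f hbij
  have : n ≤ ∑ i, A i (σ i) := by
    calc n = ∑ _i : Fin n, 1 := by simp
      _ ≤ ∑ i, A i (σ i) := by
          apply Finset.sum_le_sum
          intro i _
          have := hf i
          rw [ht] at this
          simp only [Finset.mem_filter] at this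
          exact Nat.one_le_iff_ne_zero.mpr this.2
  unfold tdet
  exact le_trans this (Finset.le_sup (f := fun σ : Equiv.Perm (Fin n) => ∑ i, A i (σ i)) (Finset.mem_univ σ))

/-- If 1 ≤ m ≤ n then L(m,n) = n. -/
theorem L_eq_n_of_m_le_n (m n : ℕ) (hm : 1 ≤ m) (hmn : m ≤ n) :
    (∀ A : Fin n → Fin n → ℕ, IsDSM m n A → n ≤ tdet A) ∧
    (∃ A : Fin n → Fin n → ℕ, IsDSM m n A ∧ tdet A = n) := by
  have hn : 0 < n := lt_of_lt_of_le hm hmn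
  haveI : NeZero n := ⟨hn.ne'⟩
  refine ⟨fun A hA => lower_bound m n hm A hA, ?_⟩
  refine ⟨fun i j => if ((j - i : Fin n) : ℕ) < m then 1 else 0, ?_, ?_⟩
  · have hsum : ∑ k : Fin n, (if (k : ℕ) < m then 1 else 0) = m := by
      rw [Fin.sum_univ_eq_sum_range (fun k => if k < m then 1 else 0)]
      have : (Finset.range n).filter (· < m) = Finset.range m := by
        ext x
        simp only [Finset.mem_filter, Finset.mem_range]
        exact ⟨fun h => h.2, fun h => ⟨lt_of_lt_of_le h hmn, h⟩⟩
      simp [Finset.sum_boole, this]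
    constructor
    · intro i
      rw [← Equiv.sum_comp (Equiv.subRight i) (fun k : Fin n => if (k : ℕ) < m then 1 else 0)] at hsum
      simp [Equiv.subRight] at hsum ⊢; rw [Finset.card_filter]; exact hsum
    · intro j
      rw [← Equiv.sum_comp (Equiv.subLeft j) (fun k : Fin n => if (k : ℕ) < m then 1 else 0)] at hsum
      simp [Equiv.subLeft] at hsum ⊢; rw [Finset.card_filter]; exact hsum
  · apply le_antisymm
    · apply Finset.sup_le
      intro σ _
      calc ∑ i, (if (((σ i) - i : Fin n) : ℕ) < m then 1 else 0)
          ≤ ∑ _i : Fin n, 1 := Finset.sum_le_sum (fun i _ => by split <;> simp)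
        _ = n := by simp
    · have : (n : ℕ) ≤ ∑ i : Fin n, (if ((((Equiv.refl (Fin n)) i) - i : Fin n) : ℕ) < m then 1 else 0) := by
        have h0 : 0 < m := hm
        simp [h0]
      refine le_trans this ?_
      unfold tdet
      exact Finset.le_sup (f := fun σ : Equiv.Perm (Fin n) => ∑ i, (fun i j => if ((j - i : Fin n) : ℕ) < m then 1 else 0) i (σ i)) (Finset.mem_univ (Equiv.refl (Fin n)))
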